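/- Let A > 0 and 0 < λ < 1 be real constants. Then the sum of the series ∑_{k=1}^∞ min{1, λ^k A} is at least ln(1 + λA) / (2 ln(λ^{-1})). -/

import Mathlib

lemma key_step (l : ℝ) (hl0 : 0 < l) (hl1 : l < 1) (x : ℝ) (hx : 0 ≤ x) :
    Real.log (1 + x) - Real.log (1 + l * x) ≤ Real.log l⁻¹ * min 1 x := by
  have h1 : (0:ℝ) < 1 + x := by linarith
  have h2 : (0:ℝ) < 1 + l * x := by nlinarith
  rw [← Real.log_div h1.ne' h2.ne']
  rcases le_total x 1 with hx1 | hx1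
  · rw [min_eq_right hx1]
    have hls := Real.log_le_sub_one_of_pos (div_pos h1 h2)
    have hq : (1+x)/(1+l*x) - 1 = (1-l)*x/(1+l*x) := by field_simp; ring
    have hlog_l : 1 - l ≤ Real.log l⁻¹ := by
      have := Real.log_le_sub_one_of_pos hl0
      rw [Real.log_inv]; linarith
    have hd : (1-l)*x/(1+l*x) ≤ (1-l)*x := by
      apply div_le_self (by nlinarith) (by nlinarith)
    have hmul : (1-l)*x ≤ Real.log l⁻¹ * x :=
      mul_le_mul_of_nonneg_right hlog_l hx
    linarith [hq ▸ hls]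
  · rw [min_eq_left hx1]
    have hle : (1+x)/(1+l*x) ≤ l⁻¹ := by
      rw [div_le_iff₀ h2]
      have : l⁻¹ * (1 + l * x) = l⁻¹ + x := by field_simp
      rw [this]
      have : (1:ℝ) ≤ l⁻¹ := by rw [one_le_inv_iff₀]; exact ⟨hl0, hl1.le⟩
      linarith
    calc Real.log ((1+x)/(1+l*x)) ≤ Real.log l⁻¹ :=
          Real.log_le_log (div_pos h1 h2) hle
      _ = Real.log l⁻¹ * 1 := by ring

theorem stmt_0 (A l : ℝ) (hA : 0 < A) (hl0 : 0 < l) (hl1 : l < 1) :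
    Real.log (1 + l * A) / (2 * Real.log l⁻¹) ≤ ∑' k : ℕ, min 1 (l ^ (k + 1) * A) := by
  set L := Real.log l⁻¹ with hLdef
  have hL : 0 < L := Real.log_pos ((one_lt_inv₀ hl0).mpr hl1)
  set f : ℕ → ℝ := fun k => min 1 (l ^ (k + 1) * A) with hf
  have hfnn : ∀ k, 0 ≤ f k := fun k => le_min zero_le_one (by positivity)
  have hfsum : Summable f := by
    apply Summable.of_nonneg_of_le hfnn (fun k => min_le_right _ _)
    have : Summable (fun k : ℕ => l ^ k) := summable_geometric_of_lt_one hl0.le hl1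
    simpa [pow_succ, mul_comm, mul_assoc, mul_left_comm] using (this.mul_right (l * A))
  set u : ℕ → ℝ := fun n => Real.log (1 + l ^ (n + 1) * A) with hu
  have hbound : ∀ n : ℕ, (u 0 - u n) / L ≤ ∑' k : ℕ, f k := by
    intro n
    rw [div_le_iff₀ hL]
    have hsum : ∀ k, u k - u (k+1) ≤ L * f k := by
      intro k
      have hx : 0 ≤ l ^ (k+1) * A := by positivity
      have := key_step l hl0 hl1 (l ^ (k+1) * A) hx
      have he2 : l ^ (k+1+1) * A = l * (l ^ (k+1) * A) := by ring
      show Real.log (1 + l ^ (k+1) * A) - Real.log (1 + l ^ (k+1+1) * A) ≤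
        Real.log l⁻¹ * min 1 (l ^ (k+1) * A)
      rw [he2]; exact this
    calc u 0 - u n = ∑ k ∈ Finset.range n, (u k - u (k+1)) := (Finset.sum_range_sub' u n).symm
      _ ≤ ∑ k ∈ Finset.range n, L * f k := Finset.sum_le_sum (fun k _ => hsum k)
      _ = (∑ k ∈ Finset.range n, f k) * L := by rw [← Finset.mul_sum]; ring
      _ ≤ (∑' k, f k) * L := by
        gcongr
        exact hfsum.sum_le_tsum _ (fun k _ => hfnn k)
  have htend : Filter.Tendsto (fun n => (u 0 - u n) / L) Filter.atTop (nhds (u 0 / L)) := by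
    have h1 : Filter.Tendsto (fun n : ℕ => l ^ (n + 1) * A) Filter.atTop (nhds 0) := by
      have := tendsto_pow_atTop_nhds_zero_of_lt_one hl0.le hl1
      have h2 := (this.comp (Filter.tendsto_add_atTop_nat 1)).mul_const A
      simpa using h2
    have h3 : Filter.Tendsto u Filter.atTop (nhds 0) := by
      have : Filter.Tendsto (fun n : ℕ => (1 : ℝ) + l ^ (n + 1) * A) Filter.atTop (nhds 1) := by
        simpa using (h1.const_add 1)
      have := (Real.continuousAt_log one_ne_zero).tendsto.comp this
      rw [Real.log_one] at this
      exact this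
    have := ((tendsto_const_nhds (x := u 0)).sub h3).div_const L
    simpa using this
  have hfinal : u 0 / L ≤ ∑' k, f k := le_of_tendsto htend (Filter.Eventually.of_forall hbound)
  have hu0 : u 0 = Real.log (1 + l * A) := by simp [hu]
  have hlognn : 0 ≤ Real.log (1 + l * A) := Real.log_nonneg (by nlinarith)
  calc Real.log (1 + l * A) / (2 * L) ≤ Real.log (1 + l * A) / L := by
        apply div_le_div_of_nonneg_left hlognn hL
        linarith
    _ ≤ ∑' k, f k := by rw [← hu0]; exact hfinal
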